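/- Let (A, B, ε) be a dual pairing, (A, μ_A) a semigroup, and l, r : A → B invertible adjoint maps. Then (A, B, ε, μ_A, l, r) is a Frobenius structure (the contraposition square ⊸ˡ ∘ (A ⊗ r) = ⊸ʳ ∘ (l ⊗ A) commutes) if and only if the shift equation ε ∘ (μ_A ⊗ r) = ε ∘ (μ_A ⊗ l) ∘ σ_{A⊗A, A} holds. -/

import Mathlib

open CategoryTheory MonoidalCategory

variable {C : Type*} [Category C] [MonoidalCategory C] [SymmetricCategory C]

/-- `ε : A ⊗ B ⟶ N` is a dual pairing (w.r.t. the fixed object `N`). -/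
def IsDualPairing (N : C) {A B : C} (ε : A ⊗ B ⟶ N) : Prop :=
  (∀ X : C, Function.Bijective (fun f : X ⟶ B => (A ◁ f) ≫ ε)) ∧
  (∀ X : C, Function.Bijective (fun g : X ⟶ A => (g ▷ B) ≫ ε))

/-- the defining equation of the left action `⊸ˡ : A ⊗ B ⟶ B` of a magma
`(A, μ)` on its dual `B`: `ε ∘ (A ⊗ ⊸ˡ) = ε ∘ (μ ⊗ B)` (modulo associators). -/
def LactSpec (N : C) {A B : C} (ε : A ⊗ B ⟶ N) (μ : A ⊗ A ⟶ A)
    (lact : A ⊗ B ⟶ B) : Prop :=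
  (A ◁ lact) ≫ ε = (α_ A A B).inv ≫ (μ ▷ B) ≫ ε

/-- the defining equation of the right action `⊸ʳ : B ⊗ A ⟶ B`:
`ε ∘ (A ⊗ ⊸ʳ) = ε ∘ ((μ ∘ σ_{A,A}) ⊗ B) ∘ (symmetry A⊗B⊗A → A⊗A⊗B)`. -/
def RactSpec (N : C) {A B : C} (ε : A ⊗ B ⟶ N) (μ : A ⊗ A ⟶ A)
    (ract : B ⊗ A ⟶ B) : Prop :=
  (A ◁ ract) ≫ ε =
    (A ◁ (β_ B A).hom) ≫ (α_ A A B).inv ≫ (((β_ A A).hom ≫ μ) ▷ B) ≫ ε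

/-- A Frobenius structure `(A, B, ε, μ, l, r)` (with the actions `lact`, `ract`
made explicit): `(A, B, ε)` is a dual pairing, `(A, μ)` is a semigroup, `l` and
`r` are invertible adjoint maps, and the contraposition law
`⊸ˡ ∘ (A ⊗ r) = ⊸ʳ ∘ (l ⊗ A)` holds. -/
def IsFrobenius (N : C) {A B : C} (ε : A ⊗ B ⟶ N) (μ : A ⊗ A ⟶ A)
    (l r : A ⟶ B) (lact : A ⊗ B ⟶ B) (ract : B ⊗ A ⟶ B) : Prop :=
  IsDualPairing N ε ∧
  ((μ ▷ A) ≫ μ = (α_ A A A).hom ≫ (A ◁ μ) ≫ μ) ∧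
  LactSpec N ε μ lact ∧ RactSpec N ε μ ract ∧
  IsIso l ∧ IsIso r ∧
  ((A ◁ r) ≫ ε = (β_ A A).hom ≫ (A ◁ l) ≫ ε) ∧
  ((A ◁ r) ≫ lact = (l ▷ A) ≫ ract)

/-- for a dual pairing `(A, B, ε)`, a semigroup `(A, μ)`, and
invertible adjoint maps `l, r : A ⟶ B`, the contraposition square commutes iff
the shift equation `ε ∘ (μ ⊗ₘ r) = ε ∘ (μ ⊗ₘ l) ∘ σ_{A⊗A, A}` holds. -/
theorem frobenius_iff_shift (N : C) {A B : C} (ε : A ⊗ B ⟶ N)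
    (hε : IsDualPairing N ε) (μ : A ⊗ A ⟶ A)
    (hμ : (μ ▷ A) ≫ μ = (α_ A A A).hom ≫ (A ◁ μ) ≫ μ)
    (lact : A ⊗ B ⟶ B) (ract : B ⊗ A ⟶ B)
    (hl : LactSpec N ε μ lact) (hr : RactSpec N ε μ ract)
    (l r : A ⟶ B) (hli : IsIso l) (hri : IsIso r)
    (hadj : (A ◁ r) ≫ ε = (β_ A A).hom ≫ (A ◁ l) ≫ ε) :
    ((A ◁ r) ≫ lact = (l ▷ A) ≫ ract) ↔
      ((μ ⊗ₘ r) ≫ ε =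
        (β_ (A ⊗ A) A).hom ≫ (α_ A A A).inv ≫ (μ ⊗ₘ l) ≫ ε) := by

  have key1 : (A ◁ ((A ◁ r) ≫ lact)) ≫ ε = (α_ A A A).inv ≫ (μ ⊗ₘ r) ≫ ε := by
    rw [MonoidalCategory.whiskerLeft_comp, Category.assoc, hl,
      MonoidalCategory.associator_inv_naturality_right_assoc,
      MonoidalCategory.tensorHom_def']
    simp [MonoidalCategory.whisker_exchange]
  have key2 : (A ◁ ((l ▷ A) ≫ ract)) ≫ ε =
      (α_ A A A).inv ≫ (β_ (A ⊗ A) A).hom ≫ (α_ A A A).inv ≫ (μ ⊗ₘ l) ≫ ε := by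
    rw [MonoidalCategory.whiskerLeft_comp, Category.assoc, hr,
      ← MonoidalCategory.whiskerLeft_comp_assoc,
      BraidedCategory.braiding_naturality_left,
      MonoidalCategory.whiskerLeft_comp_assoc,
      MonoidalCategory.associator_inv_naturality_right_assoc]
    have hex := BraidedCategory.hexagon_reverse A A A
    calc (A ◁ (β_ A A).hom) ≫ (α_ A A A).inv ≫ ((A ⊗ A) ◁ l) ≫
          (((β_ A A).hom ≫ μ) ▷ B) ≫ ε
        = ((A ◁ (β_ A A).hom) ≫ (α_ A A A).inv ≫ ((β_ A A).hom ▷ A)) ≫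
            (μ ⊗ₘ l) ≫ ε := by
          rw [MonoidalCategory.tensorHom_def, MonoidalCategory.comp_whiskerRight]
          simp only [Category.assoc, MonoidalCategory.whisker_exchange_assoc]
      _ = (α_ A A A).inv ≫ (β_ (A ⊗ A) A).hom ≫ (α_ A A A).inv ≫ (μ ⊗ₘ l) ≫ ε := by
          rw [← hex]; simp
  constructor
  · intro h
    have h2 : (A ◁ ((A ◁ r) ≫ lact)) ≫ ε = (A ◁ ((l ▷ A) ≫ ract)) ≫ ε := by rw [h]
    rw [key1, key2] at h2
    exact (cancel_epi (α_ A A A).inv).mp h2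
  · intro h
    exact (hε.1 (A ⊗ A)).injective (show (A ◁ _) ≫ ε = (A ◁ _) ≫ ε by rw [key1, key2, h])
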